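/- Let V be a finite-dimensional real normed vector space, let S, T ⊆ V be subsets, and let B ⊆ V be a bounded subset such that S ⊆ T + B = {t + b : t ∈ T, b ∈ B}. Then AC(S) ⊆ AC(T). -/

import Mathlib

open Pointwise Bornology

/-- A subset `C` of a real vector space is a cone if `t • C = C` for every `t > 0`. -/
def IsCone {V : Type*} [NormedAddCommGroup V] [NormedSpace ℝ V] (C : Set V) : Prop :=
  ∀ t : ℝ, 0 < t → t • C = C

/-- The asymptotic cone of a subset `S`: the set of `ξ` such that every open cone
containing `ξ` meets `S` in an unbounded set, together with `0`. -/
def asymptoticConeOpen {V : Type*} [NormedAddCommGroup V] [NormedSpace ℝ V] (S : Set V) : Set V :=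
  {ξ : V | ∀ C : Set V, IsOpen C → IsCone C → ξ ∈ C → ¬ IsBounded (C ∩ S)} ∪ {0}

/-- If `S` is contained in a translate `T + B` of `T` by a bounded set `B`, then the
asymptotic cone of `S` is contained in the asymptotic cone of `T`. -/
theorem asymptoticCone_subset_of_subset_add_bounded {V : Type*} [NormedAddCommGroup V]
    [NormedSpace ℝ V] [FiniteDimensional ℝ V] (S T B : Set V)
    (hB : IsBounded B) (hST : S ⊆ T + B) :
    asymptoticConeOpen S ⊆ asymptoticConeOpen T := by
  rintro ξ (hξ | hξ)
  · -- main case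
    left
    intro C hCopen hCcone hξC hCT
    -- bound on B
    obtain ⟨M₀, hM₀⟩ := hB.subset_closedBall 0
    set M := max M₀ 0 with hMdef
    have hM : B ⊆ Metric.closedBall 0 M :=
      hM₀.trans (Metric.closedBall_subset_closedBall (le_max_left _ _))
    have hM0 : 0 ≤ M := le_max_right _ _
    -- bound on C ∩ T
    obtain ⟨N, hN⟩ := hCT.subset_closedBall 0
    -- ball around ξ inside C
    obtain ⟨ε, hε, hball⟩ := Metric.isOpen_iff.mp hCopen ξ hξC
    -- the smaller cone
    set C' : Set V := {v | ∃ r : ℝ, 0 < r ∧ ‖v - r • ξ‖ < r * (ε / 2)} with hC'def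
    have hC'open : IsOpen C' := by
      have : C' = ⋃ r ∈ Set.Ioi (0:ℝ), Metric.ball (r • ξ) (r * (ε / 2)) := by
        ext v
        simp [C', Metric.mem_ball, dist_eq_norm, and_comm]
      rw [this]
      exact isOpen_biUnion fun r _ => Metric.isOpen_ball
    have hC'cone : IsCone C' := by
      intro t ht
      ext v
      constructor
      · rintro ⟨w, ⟨r, hr, hw⟩, rfl⟩
        refine ⟨t * r, by positivity, ?_⟩
        have : t • w - (t * r) • ξ = t • (w - r • ξ) := by
          rw [smul_sub, mul_smul]
        rw [this, norm_smul, Real.norm_eq_abs, abs_of_pos ht, mul_assoc]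
        exact (mul_lt_mul_iff_right₀ ht).mpr hw
      · rintro ⟨r, hr, hv⟩
        refine ⟨t⁻¹ • v, ⟨t⁻¹ * r, by positivity, ?_⟩, by
          show t • t⁻¹ • v = v
          rw [smul_smul, mul_inv_cancel₀ ht.ne', one_smul]⟩
        have : t⁻¹ • v - (t⁻¹ * r) • ξ = t⁻¹ • (v - r • ξ) := by
          rw [smul_sub, mul_smul]
        rw [this, norm_smul, Real.norm_eq_abs, abs_of_pos (inv_pos.mpr ht), mul_assoc]
        exact (mul_lt_mul_iff_right₀ (inv_pos.mpr ht)).mpr hv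
    have hξC' : ξ ∈ C' := ⟨1, one_pos, by simpa using by positivity⟩
    refine hξ C' hC'open hC'cone hξC' ?_
    -- show C' ∩ S is bounded
    apply Metric.isBounded_closedBall
      (x := (0:V)) (r := max ((‖ξ‖ + ε / 2) * (2 * M / ε + 1)) (N + M)) |>.subset
    rintro s ⟨⟨r, hr, hsr⟩, hsS⟩
    simp only [Metric.mem_closedBall, dist_zero_right]
    by_contra hbig
    push_neg at hbig
    have hb1 : (‖ξ‖ + ε / 2) * (2 * M / ε + 1) < ‖s‖ := lt_of_le_of_lt (le_max_left _ _) hbig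
    have hb2 : N + M < ‖s‖ := lt_of_le_of_lt (le_max_right _ _) hbig
    -- r is large
    have hsle : ‖s‖ ≤ r * (‖ξ‖ + ε / 2) := by
      calc ‖s‖ ≤ ‖r • ξ‖ + ‖s - r • ξ‖ := by
            have := norm_add_le (r • ξ) (s - r • ξ); simpa using this
        _ ≤ r * ‖ξ‖ + r * (ε / 2) := by
            rw [norm_smul, Real.norm_eq_abs, abs_of_pos hr]
            exact add_le_add le_rfl hsr.le
        _ = r * (‖ξ‖ + ε / 2) := by ring
    have hrbig : 2 * M / ε + 1 < r := by
      have hpos : (0:ℝ) < ‖ξ‖ + ε / 2 := by positivity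
      nlinarith [hsle, hb1]
    -- decompose s
    obtain ⟨t, htT, b, hbB, rfl⟩ := hST hsS
    have hbM : ‖b‖ ≤ M := by simpa using hM hbB
    -- t ∈ C
    have htC : t ∈ C := by
      have h1 : ‖t - r • ξ‖ < r * ε := by
        have hMε : M < r * ε / 2 := by
          have h := mul_lt_mul_of_pos_right hrbig hε
          have he : (2 * M / ε + 1) * ε = 2 * M + ε := by field_simp
          rw [he] at h
          linarith
        calc ‖t - r • ξ‖ ≤ ‖t + b - r • ξ‖ + ‖b‖ := by
              have heq : t - r • ξ = (t + b - r • ξ) + -b := by abel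
              rw [heq]
              simpa using norm_add_le (t + b - r • ξ) (-b)
          _ < r * (ε / 2) + M := add_lt_add_of_lt_of_le hsr hbM
          _ ≤ r * ε := by linarith
      have h2 : r⁻¹ • t ∈ Metric.ball ξ ε := by
        rw [Metric.mem_ball, dist_eq_norm]
        have : r⁻¹ • t - ξ = r⁻¹ • (t - r • ξ) := by
          rw [smul_sub, smul_smul, inv_mul_cancel₀ hr.ne', one_smul]
        rw [this, norm_smul, Real.norm_eq_abs, abs_of_pos (inv_pos.mpr hr)]
        rw [inv_mul_lt_iff₀ hr]
        exact h1
      have h3 : r⁻¹ • t ∈ C := hball h2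
      have h4 : t ∈ r • C := ⟨r⁻¹ • t, h3, by
        show r • r⁻¹ • t = t
        rw [smul_smul, mul_inv_cancel₀ hr.ne', one_smul]⟩
      rwa [hCcone r hr] at h4
    have htN : ‖t‖ ≤ N := by simpa using hN ⟨htC, htT⟩
    have : ‖t + b‖ ≤ N + M := (norm_add_le t b).trans (add_le_add htN hbM)
    linarith
  · right
    exact hξ
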